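/- A real 10×10 block lower-triangular type II operator C = [[Mᵗ,0,0],[A,Ω,0],[B,D,M]] satisfies 2·rank(M) + rank(Ω) ≤ rank(C) ≤ min{rank(M)+7, rank(Ω)+6}. If moreover A = 0, B = 0, D = 0 (type D), then rank(C) = 2·rank(M) + rank(Ω). -/

import Mathlib

set_option synthInstance.maxHeartbeats 1000000
set_option maxHeartbeats 1000000
set_option linter.unusedSectionVars false


open Matrix

/-- Bivector index type: 3+4+3 block decomposition `U ⊕ W ⊕ V'`. -/
abbrev BivIdx := Fin 3 ⊕ Fin 4 ⊕ Fin 3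

/-- Type II block lower-triangular operator `[[Mᵗ,0,0],[A,Ω,0],[B,D,M]]`. -/
def typeIIOp (M : Matrix (Fin 3) (Fin 3) ℝ) (Om : Matrix (Fin 4) (Fin 4) ℝ)
    (A : Matrix (Fin 4) (Fin 3) ℝ) (B : Matrix (Fin 3) (Fin 3) ℝ)
    (D : Matrix (Fin 3) (Fin 4) ℝ) : Matrix BivIdx BivIdx ℝ :=
  Matrix.of fun i j =>
    match i, j with
    | Sum.inl a, Sum.inl b => Mᵀ a b
    | Sum.inr (Sum.inl a), Sum.inl b => A a b
    | Sum.inr (Sum.inl a), Sum.inr (Sum.inl b) => Om a b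
    | Sum.inr (Sum.inr a), Sum.inl b => B a b
    | Sum.inr (Sum.inr a), Sum.inr (Sum.inl b) => D a b
    | Sum.inr (Sum.inr a), Sum.inr (Sum.inr b) => M a b
    | _, _ => 0

open Module

section Helpers

variable {m₁ m₂ n₁ n₂ : Type*} [Fintype m₁] [Fintype m₂] [Fintype n₁] [Fintype n₂]

lemma myRankAddLe (A B : Matrix m₁ n₁ ℝ) : (A + B).rank ≤ A.rank + B.rank := by
  classical
  rw [Matrix.rank, Matrix.rank, Matrix.rank]
  have h : (A + B).mulVecLin = A.mulVecLin + B.mulVecLin := by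
    ext v i; simp [Matrix.add_mulVec]
  rw [h]
  have hr : LinearMap.range (A.mulVecLin + B.mulVecLin) ≤
      LinearMap.range A.mulVecLin ⊔ LinearMap.range B.mulVecLin := by
    rintro x ⟨v, rfl⟩
    exact Submodule.add_mem_sup ⟨v, rfl⟩ ⟨v, rfl⟩
  exact (Submodule.finrank_mono hr).trans
    (Submodule.finrank_add_le_finrank_add_finrank _ _)

lemma myColsL (A : Matrix m₁ n₁ ℝ) [DecidableEq n₁] [DecidableEq n₂] :
    (fromCols A (0 : Matrix m₁ n₂ ℝ)).rank ≤ A.rank := by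
  have h : fromCols A (0 : Matrix m₁ n₂ ℝ) =
      A * fromCols (1 : Matrix n₁ n₁ ℝ) 0 := by
    rw [mul_fromCols]; simp
  rw [h]; exact rank_mul_le_left _ _

lemma myColsR (A : Matrix m₁ n₂ ℝ) [DecidableEq n₁] [DecidableEq n₂] :
    (fromCols (0 : Matrix m₁ n₁ ℝ) A).rank ≤ A.rank := by
  have h : fromCols (0 : Matrix m₁ n₁ ℝ) A =
      A * fromCols 0 (1 : Matrix n₂ n₂ ℝ) := by
    rw [mul_fromCols]; simp
  rw [h]; exact rank_mul_le_left _ _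

lemma myRowsT (A : Matrix m₁ n₁ ℝ) [DecidableEq m₁] [DecidableEq m₂] :
    (fromRows A (0 : Matrix m₂ n₁ ℝ)).rank ≤ A.rank := by
  have h : fromRows A (0 : Matrix m₂ n₁ ℝ) =
      fromRows (1 : Matrix m₁ m₁ ℝ) 0 * A := by
    rw [fromRows_mul]; simp
  rw [h]; exact rank_mul_le_right _ _

lemma myRowsB (A : Matrix m₂ n₁ ℝ) [DecidableEq m₁] [DecidableEq m₂] :
    (fromRows (0 : Matrix m₁ n₁ ℝ) A).rank ≤ A.rank := by
  have h : fromRows (0 : Matrix m₁ n₁ ℝ) A =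
      fromRows 0 (1 : Matrix m₂ m₂ ℝ) * A := by
    rw [fromRows_mul]; simp
  rw [h]; exact rank_mul_le_right _ _

lemma myEmbedTL (P : Matrix m₁ n₁ ℝ) [DecidableEq m₁] [DecidableEq m₂]
    [DecidableEq n₁] [DecidableEq n₂] :
    (fromBlocks P (0 : Matrix m₁ n₂ ℝ) (0 : Matrix m₂ n₁ ℝ) (0 : Matrix m₂ n₂ ℝ)).rank
      ≤ P.rank := by
  have h : fromBlocks P (0 : Matrix m₁ n₂ ℝ) (0 : Matrix m₂ n₁ ℝ) (0 : Matrix m₂ n₂ ℝ)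
      = fromRows (fromCols P 0) 0 := by
    rw [← fromCols_zero, fromRows_fromCols_eq_fromBlocks]
  rw [h]; exact (myRowsT _).trans (myColsL _)

lemma myEmbedBR (R : Matrix m₂ n₂ ℝ) [DecidableEq m₁] [DecidableEq m₂]
    [DecidableEq n₁] [DecidableEq n₂] :
    (fromBlocks (0 : Matrix m₁ n₁ ℝ) (0 : Matrix m₁ n₂ ℝ) (0 : Matrix m₂ n₁ ℝ) R).rank
      ≤ R.rank := by
  have h : fromBlocks (0 : Matrix m₁ n₁ ℝ) (0 : Matrix m₁ n₂ ℝ) (0 : Matrix m₂ n₁ ℝ) R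
      = fromRows 0 (fromCols 0 R) := by
    rw [← fromCols_zero, fromRows_fromCols_eq_fromBlocks]
  rw [h]; exact (myRowsB _).trans (myColsR _)

lemma myLeftCols (P : Matrix m₁ n₁ ℝ) (Q : Matrix m₂ n₁ ℝ)
    [DecidableEq n₁] [DecidableEq n₂] :
    (fromBlocks P (0 : Matrix m₁ n₂ ℝ) Q (0 : Matrix m₂ n₂ ℝ)).rank
      ≤ Fintype.card n₁ := by
  have h : fromBlocks P (0 : Matrix m₁ n₂ ℝ) Q (0 : Matrix m₂ n₂ ℝ)
      = fromRows P Q * fromCols (1 : Matrix n₁ n₁ ℝ) 0 := by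
    rw [fromRows_mul, mul_fromCols, mul_fromCols]; simp
  rw [h]
  exact (rank_mul_le_right _ _).trans (rank_le_card_height _)

lemma myLower (P : Matrix m₁ n₁ ℝ) (Q : Matrix m₂ n₁ ℝ) (R : Matrix m₂ n₂ ℝ) :
    P.rank + R.rank ≤ (fromBlocks P (0 : Matrix m₁ n₂ ℝ) Q R).rank := by
  classical
  set C := fromBlocks P (0 : Matrix m₁ n₂ ℝ) Q R with hC
  let φ : LinearMap.ker C.mulVecLin →ₗ[ℝ] (n₁ → ℝ) :=
    (LinearMap.funLeft ℝ ℝ Sum.inl).comp (LinearMap.ker C.mulVecLin).subtype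
  have hx_top : ∀ x : LinearMap.ker C.mulVecLin,
      P *ᵥ ((x : (n₁ ⊕ n₂) → ℝ) ∘ Sum.inl) = 0 := by
    rintro ⟨x, hx⟩
    have h0 : C *ᵥ x = 0 := hx
    rw [hC, fromBlocks_mulVec] at h0
    funext i
    have := congrFun h0 (Sum.inl i)
    simpa using this
  have hx_bot : ∀ x : LinearMap.ker C.mulVecLin,
      ((x : (n₁ ⊕ n₂) → ℝ) ∘ Sum.inl) = 0 → R *ᵥ ((x : (n₁ ⊕ n₂) → ℝ) ∘ Sum.inr) = 0 := by
    rintro ⟨x, hx⟩ hz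
    have h0 : C *ᵥ x = 0 := hx
    rw [hC, fromBlocks_mulVec] at h0
    funext i
    have := congrFun h0 (Sum.inr i)
    simp only [Sum.elim_inr, Pi.zero_apply] at this
    rw [hz, mulVec_zero] at this
    simpa using this
  have hrange : LinearMap.range φ ≤ LinearMap.ker P.mulVecLin := by
    rintro y ⟨x, rfl⟩
    exact hx_top x
  let ψ : LinearMap.ker φ →ₗ[ℝ] (n₂ → ℝ) :=
    (LinearMap.funLeft ℝ ℝ Sum.inr).comp
      ((LinearMap.ker C.mulVecLin).subtype.comp (LinearMap.ker φ).subtype)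
  have hψrange : ∀ z : LinearMap.ker φ, ψ z ∈ LinearMap.ker R.mulVecLin := by
    rintro ⟨x, hxφ⟩
    exact hx_bot x hxφ
  let ψ' : LinearMap.ker φ →ₗ[ℝ] LinearMap.ker R.mulVecLin :=
    ψ.codRestrict _ hψrange
  have hψker : LinearMap.ker ψ' = ⊥ := by
    rw [LinearMap.ker_eq_bot']
    rintro ⟨⟨x, hx⟩, hxφ⟩ h
    have hinr : x ∘ Sum.inr = 0 := congrArg Subtype.val h
    have hinl : x ∘ Sum.inl = 0 := hxφ
    apply Subtype.ext
    apply Subtype.ext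
    funext i
    cases i with
    | inl i => exact congrFun hinl i
    | inr i => exact congrFun hinr i
  have hψinj : Function.Injective ψ' := by
    rintro ⟨⟨x, hx⟩, hxφ⟩ ⟨⟨y, hy⟩, hyφ⟩ hab
    have hinr : x ∘ Sum.inr = y ∘ Sum.inr := congrArg Subtype.val hab
    have hxl : x ∘ Sum.inl = 0 := hxφ
    have hyl : y ∘ Sum.inl = 0 := hyφ
    apply Subtype.ext
    apply Subtype.ext
    funext i
    cases i with
    | inl i => exact (congrFun hxl i).trans (congrFun hyl i).symm
    | inr i => exact congrFun hinr i
  have e1 : finrank ℝ (LinearMap.range φ) + finrank ℝ (LinearMap.ker φ)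
      = finrank ℝ (LinearMap.ker C.mulVecLin) := LinearMap.finrank_range_add_finrank_ker φ
  have e2 : finrank ℝ (LinearMap.range φ) ≤ finrank ℝ (LinearMap.ker P.mulVecLin) :=
    Submodule.finrank_mono hrange
  have e3 : finrank ℝ (LinearMap.ker φ) ≤ finrank ℝ (LinearMap.ker R.mulVecLin) :=
    LinearMap.finrank_le_finrank_of_injective hψinj
  have rC : C.rank + finrank ℝ (LinearMap.ker C.mulVecLin)
      = Fintype.card n₁ + Fintype.card n₂ := by
    have := LinearMap.finrank_range_add_finrank_ker C.mulVecLin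
    rwa [Module.finrank_fintype_fun_eq_card, Fintype.card_sum] at this
  have rP : P.rank + finrank ℝ (LinearMap.ker P.mulVecLin) = Fintype.card n₁ := by
    have := LinearMap.finrank_range_add_finrank_ker P.mulVecLin
    rwa [Module.finrank_fintype_fun_eq_card] at this
  have rR : R.rank + finrank ℝ (LinearMap.ker R.mulVecLin) = Fintype.card n₂ := by
    have := LinearMap.finrank_range_add_finrank_ker R.mulVecLin
    rwa [Module.finrank_fintype_fun_eq_card] at this
  omega

end Helpers


/-- `2 rank M + rank Ω ≤ rank C ≤ min(rank M + 7, rank Ω + 6)`, with equality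
`rank C = 2 rank M + rank Ω` in the type D case `A = B = D = 0`. -/
theorem stmt15 (M : Matrix (Fin 3) (Fin 3) ℝ) (Om : Matrix (Fin 4) (Fin 4) ℝ)
    (A : Matrix (Fin 4) (Fin 3) ℝ) (B : Matrix (Fin 3) (Fin 3) ℝ)
    (D : Matrix (Fin 3) (Fin 4) ℝ) :
    2 * M.rank + Om.rank ≤ (typeIIOp M Om A B D).rank ∧
    (typeIIOp M Om A B D).rank ≤ min (M.rank + 7) (Om.rank + 6) ∧
    (A = 0 → B = 0 → D = 0 →
      (typeIIOp M Om A B D).rank = 2 * M.rank + Om.rank) := by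
  classical
  set N : Matrix (Fin 3 ⊕ Fin 4) (Fin 3 ⊕ Fin 4) ℝ := fromBlocks Mᵀ 0 A Om with hN
  set Q : Matrix (Fin 3) (Fin 3 ⊕ Fin 4) ℝ := fromCols B D with hQ
  set C₀ : Matrix ((Fin 3 ⊕ Fin 4) ⊕ Fin 3) ((Fin 3 ⊕ Fin 4) ⊕ Fin 3) ℝ :=
    fromBlocks N 0 Q M with hC₀
  have hre : typeIIOp M Om A B D =
      reindex (Equiv.sumAssoc (Fin 3) (Fin 4) (Fin 3))
        (Equiv.sumAssoc (Fin 3) (Fin 4) (Fin 3)) C₀ := by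
    ext i j
    rcases i with a | b | c <;> rcases j with d | e | f <;>
      simp [typeIIOp, hC₀, hN, hQ, Equiv.sumAssoc, fromCols]
  have hrank : (typeIIOp M Om A B D).rank = C₀.rank := by
    rw [hre, rank_reindex]
  -- lower bound
  have low : 2 * M.rank + Om.rank ≤ C₀.rank := by
    have h1 : N.rank + M.rank ≤ C₀.rank := myLower N Q M
    have h2 : Mᵀ.rank + Om.rank ≤ N.rank := myLower Mᵀ A Om
    rw [rank_transpose] at h2
    omega
  -- first split : C₀ = [N 0; Q 0] + [0 0; 0 M]
  have hsplit1 : C₀ = fromBlocks N 0 Q 0 + fromBlocks 0 0 0 M := by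
    rw [hC₀, fromBlocks_add]
    simp
  have card7 : Fintype.card (Fin 3 ⊕ Fin 4) = 7 := by simp
  have up1 : C₀.rank ≤ M.rank + 7 := by
    calc C₀.rank ≤ (fromBlocks N 0 Q 0).rank + (fromBlocks 0 0 0 M).rank := by
          rw [hsplit1]; exact myRankAddLe _ _
      _ ≤ 7 + M.rank := by
          have := myLeftCols N Q (n₂ := Fin 3)
          rw [card7] at this
          exact add_le_add this (myEmbedBR M)
      _ = M.rank + 7 := by omega
  -- second split
  have up2 : C₀.rank ≤ Om.rank + 6 := by
    set N' : Matrix (Fin 3 ⊕ Fin 4) (Fin 3 ⊕ Fin 4) ℝ := fromBlocks Mᵀ 0 A 0 with hN'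
    have hNsplit : N = N' + fromBlocks 0 0 0 Om := by
      rw [hN, hN', fromBlocks_add]; simp
    have hsplit2 : C₀ = fromBlocks N' 0 Q M + fromBlocks (fromBlocks 0 0 0 Om) 0 0 0 := by
      have hfb := fromBlocks_add N' (0 : Matrix (Fin 3 ⊕ Fin 4) (Fin 3) ℝ) Q M
        (fromBlocks (0 : Matrix (Fin 3) (Fin 3) ℝ) 0 0 Om) (0 : Matrix (Fin 3 ⊕ Fin 4) (Fin 3) ℝ)
        (0 : Matrix (Fin 3) (Fin 3 ⊕ Fin 4) ℝ) (0 : Matrix (Fin 3) (Fin 3) ℝ)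
      rw [hfb, ← hNsplit, add_zero, add_zero, add_zero, hC₀]
    have p2 : (fromBlocks (fromBlocks (0 : Matrix (Fin 3) (Fin 3) ℝ) 0 0 Om) 0 0
        (0 : Matrix (Fin 3) (Fin 3) ℝ)).rank ≤ Om.rank := by
      refine (myEmbedTL (fromBlocks (0 : Matrix (Fin 3) (Fin 3) ℝ) 0 0 Om)).trans ?_
      exact myEmbedBR (m₁ := Fin 3) (n₁ := Fin 3) Om
    have p1 : (fromBlocks N' 0 Q M).rank ≤ 6 := by
      have hrowsplit : fromBlocks N' (0 : Matrix (Fin 3 ⊕ Fin 4) (Fin 3) ℝ) Q M =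
          fromRows (fromCols N' 0) 0 + fromRows 0 (fromCols Q M) := by
        rw [← fromRows_fromCols_eq_fromBlocks]
        ext (i | i) j <;> simp
      have b1 : (fromRows (fromCols N' (0 : Matrix (Fin 3 ⊕ Fin 4) (Fin 3) ℝ))
          (0 : Matrix (Fin 3) ((Fin 3 ⊕ Fin 4) ⊕ Fin 3) ℝ)).rank ≤ 3 := by
        refine (myRowsT _).trans ((myColsL _).trans ?_)
        have := myLeftCols Mᵀ A (n₂ := Fin 4)
        rw [hN']
        simpa using this
      have b2 : (fromRows (0 : Matrix (Fin 3 ⊕ Fin 4) ((Fin 3 ⊕ Fin 4) ⊕ Fin 3) ℝ)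
          (fromCols Q M)).rank ≤ 3 := by
        refine (myRowsB _).trans ?_
        have := rank_le_card_height (fromCols Q M)
        simpa using this
      calc (fromBlocks N' 0 Q M).rank
          ≤ _ + _ := by rw [hrowsplit]; exact myRankAddLe _ _
        _ ≤ 6 := by omega
    calc C₀.rank ≤ (fromBlocks N' 0 Q M).rank
          + (fromBlocks (fromBlocks (0 : Matrix (Fin 3) (Fin 3) ℝ) 0 0 Om) 0 0
            (0 : Matrix (Fin 3) (Fin 3) ℝ)).rank := by
          rw [hsplit2]; exact myRankAddLe _ _
      _ ≤ Om.rank + 6 := by omega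
  refine ⟨by rw [hrank]; exact low, by rw [hrank]; exact le_min up1 up2, ?_⟩
  -- type D case
  intro hA hB hD
  subst hA; subst hB; subst hD
  have hQ0 : Q = 0 := by rw [hQ]; exact fromCols_zero
  have upD : C₀.rank ≤ 2 * M.rank + Om.rank := by
    have hNsplitD : N = fromBlocks Mᵀ 0 0 0 + fromBlocks 0 0 0 Om := by
      rw [hN, fromBlocks_add]; simp
    have hrN : N.rank ≤ M.rank + Om.rank := by
      calc N.rank ≤ (fromBlocks Mᵀ 0 0 (0 : Matrix (Fin 4) (Fin 4) ℝ)).rank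
            + (fromBlocks (0 : Matrix (Fin 3) (Fin 3) ℝ) 0 0 Om).rank := by
            rw [hNsplitD]; exact myRankAddLe _ _
        _ ≤ M.rank + Om.rank := by
            have h3 := (myEmbedTL Mᵀ (m₂ := Fin 4) (n₂ := Fin 4))
            rw [rank_transpose] at h3
            exact add_le_add h3 (myEmbedBR Om)
    calc C₀.rank ≤ (fromBlocks N 0 Q 0).rank + (fromBlocks 0 0 0 M).rank := by
          rw [hsplit1]; exact myRankAddLe _ _
      _ ≤ N.rank + M.rank := by
          rw [hQ0]
          exact add_le_add (myEmbedTL N) (myEmbedBR M)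
      _ ≤ 2 * M.rank + Om.rank := by omega
  rw [hrank]
  exact le_antisymm upD low
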